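/- Let r ≥ 1 and d ≥ 1. The coefficient of z^{-(k+2)} in the Laurent expansion (in 1/z) of (-1)^{(d-1)(r+1)} · d^{-(r+1)} z^{-(r+1)} · Σ_{m≥0} binomial(-(r+1), m) (h/(dz))^m · h^l, evaluated by taking the coefficient of h^r (i.e., integrating h^l·(h+dz)^{-(r+1)} over ℙ^r), equals (-1)^{d(r+1)+k}/d^{k+2} · binomial(k+1, r) when k = 2r - 1 - l and 1 ≤ l ≤ r, and equals 0 for all other values of k ≥ 0. -/

import Mathlib

open Finset

/-- The generalized (falling-factorial) binomial coefficient
`binom(a, m) = a(a-1)⋯(a-m+1)/m!`. -/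
noncomputable def genBinom (a : ℚ) (m : ℕ) : ℚ :=
  (∏ i ∈ range m, (a - i)) / m.factorial

/-- The coefficient of `z^{-(k+2)} h^r` in the Laurent expansion
`(-1)^{(d-1)(r+1)} d^{-(r+1)} z^{-(r+1)} Σ_{m≥0} binom(-(r+1), m) (h/(dz))^m · h^l`
(modulo `h^{r+1}`): the term `m` contributes `h^{l+m} z^{-(r+1)-m}`, so only
`m = k+2-(r+1)` with `l + m = r` can contribute. -/
noncomputable def oneptCoeff (r d l k : ℕ) : ℚ :=
  if r + 1 ≤ k + 2 ∧ l + (k + 2 - (r + 1)) = r then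
    (-1 : ℚ) ^ ((d - 1) * (r + 1)) * (1 / (d : ℚ)) ^ (r + 1) *
      genBinom (-(r + 1 : ℚ)) (k + 2 - (r + 1)) * (1 / (d : ℚ)) ^ (k + 2 - (r + 1))
  else 0

lemma genBinom_neg (r m : ℕ) :
    genBinom (-(r + 1 : ℚ)) m = (-1) ^ m * ((r + m).choose m : ℚ) := by
  induction m with
  | zero => simp [genBinom]
  | succ m ih =>
    have hfac : ((m + 1).factorial : ℚ) = (m + 1) * m.factorial := by
      rw [Nat.factorial_succ]; push_cast; ring
    have hchoose : ((r + (m + 1)).choose (m + 1) : ℚ) * (m + 1)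
        = ((r + m + 1) : ℚ) * ((r + m).choose m : ℚ) := by
      have := Nat.add_one_mul_choose_eq (r + m) m
      have : ((r + m + 1) * (r + m).choose m : ℕ)
          = ((r + m + 1).choose (m + 1) * (m + 1) : ℕ) := by
        simpa [Nat.succ_eq_add_one] using this
      have h2 : ((r + m + 1) * (r + m).choose m : ℚ)
          = ((r + m + 1).choose (m + 1) * (m + 1) : ℚ) := by exact_mod_cast this
      have hidx : r + (m + 1) = r + m + 1 := by ring
      rw [hidx]
      linarith [h2]
    unfold genBinom at ih ⊢
    rw [prod_range_succ, hfac]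
    have hm : (m.factorial : ℚ) ≠ 0 := by exact_mod_cast m.factorial_ne_zero
    have hm1 : ((m : ℚ) + 1) ≠ 0 := by positivity
    field_simp at ih ⊢
    rw [ih]
    have hp : ((-1 : ℚ)) ^ (m + 1) = (-1) ^ m * (-1) := by ring
    rw [hp]
    linear_combination ((-1 : ℚ) ^ m * (m.factorial : ℚ)) * hchoose

/-- the coefficient equals `(-1)^{d(r+1)+k}/d^{k+2} · C(k+1, r)` when
`k = 2r - 1 - l` (with `1 ≤ l ≤ r`), and `0` for all other `k`. -/
theorem stmt_15 (r d l : ℕ) (hr : 1 ≤ r) (hd : 1 ≤ d) (hl : 1 ≤ l) (hl' : l ≤ r) :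
    ∀ k : ℕ, oneptCoeff r d l k
      = if k = 2 * r - 1 - l then
          (-1 : ℚ) ^ (d * (r + 1) + k) / (d : ℚ) ^ (k + 2) * ((k + 1).choose r : ℚ)
        else 0 := by
  intro k
  by_cases hk : k = 2 * r - 1 - l
  · rw [if_pos hk]
    have hk2 : k + 2 = 2 * r + 1 - l := by omega
    have hcond : r + 1 ≤ k + 2 ∧ l + (k + 2 - (r + 1)) = r := by omega
    have hm : k + 2 - (r + 1) = r - l := by omega
    rw [oneptCoeff, if_pos hcond, hm, genBinom_neg]
    have hch : (r + (r - l)).choose (r - l) = (k + 1).choose r := by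
      have h1 : r + (r - l) = 2 * r - l := by omega
      have h2 : k + 1 = 2 * r - l := by omega
      rw [h1, h2]
      have := Nat.choose_symm (n := 2 * r - l) (k := r) (by omega)
      have h3 : 2 * r - l - r = r - l := by omega
      rw [h3] at this
      exact this
    rw [hch]
    have hsign : (-1 : ℚ) ^ (d * (r + 1) + k)
        = (-1 : ℚ) ^ ((d - 1) * (r + 1)) * (-1) ^ (r - l) := by
      have he : d * (r + 1) + k = (d - 1) * (r + 1) + (r - l) + 2 * r := by
        obtain ⟨n, rfl⟩ := Nat.exists_eq_add_of_le hd
        have h1 : (1 + n) * (r + 1) = n * (r + 1) + (r + 1) := by ring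
        have h2 : 1 + n - 1 = n := by omega
        rw [h1, h2]
        omega
      rw [he, pow_add, pow_add, pow_mul]
      norm_num
    have hd0 : (d : ℚ) ≠ 0 := by positivity
    have hpow : (1 / (d : ℚ)) ^ (r + 1) * (1 / (d : ℚ)) ^ (r - l)
        = 1 / (d : ℚ) ^ (k + 2) := by
      rw [← pow_add]
      have : r + 1 + (r - l) = k + 2 := by omega
      rw [this, one_div, one_div, inv_pow]
    rw [hsign]
    have hdp : (d : ℚ) ^ 2 * (d : ℚ) ^ k = (d : ℚ) * (d : ℚ) ^ r * (d : ℚ) ^ (r - l) := by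
      have h1 : (d : ℚ) ^ 2 * (d : ℚ) ^ k = (d : ℚ) ^ (2 + k) := by rw [pow_add]
      have h2 : (d : ℚ) * (d : ℚ) ^ r * (d : ℚ) ^ (r - l) = (d : ℚ) ^ (1 + r + (r - l)) := by
        rw [pow_add, pow_add, pow_one]
      rw [h1, h2]
      congr 1
      omega
    rw [div_eq_mul_one_div (_ * _) ((d : ℚ) ^ (k + 2)), ← hpow]
    ring
  · rw [if_neg hk]
    rw [oneptCoeff, if_neg]
    rintro ⟨h1, h2⟩
    omega
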